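/- If an ultimately periodic sequence (a_n)_{n≥0} in O_K gives a continued fraction converging to a real quartic irrational ξ that is quadratic over K, then there exist real constants 0 < t_1 ≤ t_2 such that t_1 ≤ |Q_n|·|ξ·Q_n − P_n| ≤ t_2 for all sufficiently large n. -/

import Mathlib

open Filter Topology

/-- Numerator continuants: `cfP a (n+1) = Pₙ`, with `cfP a 0 = P₋₁ = 1`. -/
def cfP {R : Type*} [CommRing R] (a : ℕ → R) : ℕ → R
  | 0 => 1
  | 1 => a 0
  | n + 2 => a (n + 1) * cfP a (n + 1) + cfP a n

/-- Denominator continuants: `cfQ a (n+1) = Qₙ`, with `cfQ a 0 = Q₋₁ = 0`. -/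
def cfQ {R : Type*} [CommRing R] (a : ℕ → R) : ℕ → R
  | 0 => 0
  | 1 => 1
  | n + 2 => a (n + 1) * cfQ a (n + 1) + cfQ a n

/-- The sequence `a` is ultimately periodic. -/
def UltimatelyPeriodic {α : Type*} (a : ℕ → α) : Prop :=
  ∃ N k : ℕ, 1 ≤ k ∧ ∀ n > N, a (n + k) = a n

/-- The continued fraction `[a₀, a₁, …]` converges to `ξ`:
`Qₙ ≠ 0` for all sufficiently large `n` and `Pₙ/Qₙ → ξ`. -/
def CFConvergesTo (a : ℕ → ℝ) (ξ : ℝ) : Prop :=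
  (∃ N, ∀ n ≥ N, cfQ a (n + 1) ≠ 0) ∧
    Tendsto (fun n => cfP a (n + 1) / cfQ a (n + 1)) atTop (nhds ξ)

section helpers
lemma rec_eq {x y c e : ℕ → ℝ}
    (hx : ∀ n, x (n+2) = c n * x (n+1) + e n * x n)
    (hy : ∀ n, y (n+2) = c n * y (n+1) + e n * y n)
    (h0 : x 0 = y 0) (h1 : x 1 = y 1) : ∀ n, x n = y n := by
  intro n
  induction n using Nat.strong_induction_on with
  | _ n ih =>
    match n with
    | 0 => exact h0
    | 1 => exact h1
    | (m+2) => rw [hx, hy, ih m (by omega), ih (m+1) (by omega)]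

lemma class_per (x y : ℕ → ℝ) (hxp : ∀ j, x (j+2) = x j) (hyp : ∀ j, y (j+2) = y j)
    (hx0 : x 0 ≠ 0) (hy0 : y 0 ≠ 0)
    (hrat : Tendsto (fun j => y j / x j) atTop (nhds 0)) : False := by
  have hx2 : ∀ j, x (2*j) = x 0 := by
    intro j; induction j with
    | zero => rfl
    | succ m ih => rw [show 2*(m+1) = 2*m+2 by ring, hxp, ih]
  have hy2 : ∀ j, y (2*j) = y 0 := by
    intro j; induction j with
    | zero => rfl
    | succ m ih => rw [show 2*(m+1) = 2*m+2 by ring, hyp, ih]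
  have hmono : Tendsto (fun j : ℕ => 2*j) atTop atTop :=
    tendsto_atTop_mono (f := id) (fun j => by simp only [id]; omega) tendsto_id
  have h2 : Tendsto (fun j : ℕ => y (2*j) / x (2*j)) atTop (nhds 0) := hrat.comp hmono
  have h3 : Tendsto (fun _ : ℕ => y 0 / x 0) atTop (nhds 0) := by
    apply h2.congr; intro j; rw [hx2, hy2]
  have := tendsto_nhds_unique h3 tendsto_const_nhds
  have : y 0 = 0 := by
    field_simp at this
    linarith
  exact hy0 this

lemma rec_form (lam mu : ℝ) (h : lam ≠ mu) (u : ℕ → ℝ)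
    (hu : ∀ j, u (j+2) = (lam+mu) * u (j+1) - lam*mu * u j) :
    ∀ j, u j = ((u 1 - mu*u 0)/(lam-mu)) * lam^j + ((lam*u 0 - u 1)/(lam-mu)) * mu^j := by
  have hlm : lam - mu ≠ 0 := sub_ne_zero.mpr h
  exact rec_eq (x := u)
    (y := fun j => ((u 1 - mu*u 0)/(lam-mu)) * lam^j + ((lam*u 0 - u 1)/(lam-mu)) * mu^j)
    (c := fun _ => lam+mu) (e := fun _ => -(lam*mu))
    (fun n => by rw [hu]; ring)
    (fun n => by field_simp; ring)
    (by field_simp; ring) (by field_simp; ring)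

lemma rec_form_par (eps : ℝ) (heps : eps^2 = 1) (u : ℕ → ℝ)
    (hu : ∀ j, u (j+2) = (2*eps) * u (j+1) - u j) :
    ∀ j, u j = eps^j * (u 0 + (j:ℝ) * (eps * u 1 - u 0)) := by
  exact rec_eq (x := u)
    (y := fun j => eps^j * (u 0 + (j:ℝ) * (eps * u 1 - u 0)))
    (c := fun _ => 2*eps) (e := fun _ => -1)
    (fun n => by rw [hu]; ring)
    (fun n => by
      push_cast
      have h2 : eps^(n+2) = eps^n := by rw [pow_add, heps, mul_one]
      have h1 : eps^(n+1) = eps^n * eps := by rw [pow_succ]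
      rw [h2, h1]
      linear_combination (-(2*eps^n*(u 0 + ((n:ℝ)+1)*(eps * u 1 - u 0)))) * heps)
    (by simp) (by
      simp only [pow_one, Nat.cast_one, one_mul]
      linear_combination (-(u 1)) * heps)

lemma abs_sub_le_abs_add (A B : ℝ) : |A| - |B| ≤ |A + B| := by
  have h := abs_add_le (A + B) (-B)
  simp only [add_neg_cancel_right, abs_neg] at h
  linarith

lemma class_hyp (lam mu : ℝ) (x y : ℕ → ℝ)
    (hd : |lam * mu| = 1) (hlam : 1 < |lam|)
    (hxrec : ∀ j, x (j+2) = (lam+mu) * x (j+1) - lam*mu * x j)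
    (hyrec : ∀ j, y (j+2) = (lam+mu) * y (j+1) - lam*mu * y j)
    (hx : ∀ j, x j ≠ 0) (hy0 : y 0 ≠ 0)
    (hrat : Tendsto (fun j => y j / x j) atTop (nhds 0)) :
    (∃ L, 0 < L ∧ Tendsto (fun j => |x j| * |y j|) atTop (nhds L)) ∨
    ((∀ j, x j = x 0 * mu^j) ∧ (∀ j, y j = y 0 * mu^j)) := by
  have hmu0 : mu ≠ 0 := by
    intro h; rw [h, mul_zero, abs_zero] at hd; norm_num at hd
  have hlam0 : lam ≠ 0 := by
    intro h; rw [h, zero_mul, abs_zero] at hd; norm_num at hd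
  have habs : |lam| * |mu| = 1 := by rw [← abs_mul]; exact hd
  have hmuabspos : 0 < |mu| := abs_pos.mpr hmu0
  have hlamabspos : (0:ℝ) < |lam| := by linarith
  have hmu1 : |mu| < 1 := by nlinarith
  have hne : lam ≠ mu := by
    intro h; rw [h] at hlam
    have : |mu| = |lam| := by rw [h]
    nlinarith
  set α := (x 1 - mu*x 0)/(lam-mu) with hαdef
  set βx := (lam*x 0 - x 1)/(lam-mu) with hβdef
  set γ := (y 1 - mu*y 0)/(lam-mu) with hγdef
  set δ := (lam*y 0 - y 1)/(lam-mu) with hδdef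
  have hxf : ∀ j, x j = α*lam^j + βx*mu^j := rec_form lam mu hne x hxrec
  have hyf : ∀ j, y j = γ*lam^j + δ*mu^j := rec_form lam mu hne y hyrec
  have hsumx : α + βx = x 0 := by
    have := hxf 0; simp at this; linarith
  have hsumy : γ + δ = y 0 := by
    have := hyf 0; simp at this; linarith
  by_cases hα : α = 0
  · by_cases hγ0 : γ = 0
    · right
      have hβx : βx = x 0 := by rw [hα] at hsumx; linarith
      have hδ : δ = y 0 := by rw [hγ0] at hsumy; linarith
      constructor
      · intro j; rw [hxf j, hα, hβx]; ring
      · intro j; rw [hyf j, hγ0, hδ]; ring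
    · exfalso
      have hβx : βx = x 0 := by rw [hα] at hsumx; linarith
      have hx0 : x 0 ≠ 0 := hx 0
      set R := |lam| / |mu| with hR
      have hR1 : 1 < R := by
        rw [hR, lt_div_iff₀ hmuabspos]; nlinarith
      set T := fun j : ℕ => (|γ|/|x 0|) * R^j - |δ|/|x 0| with hT
      have hTle : ∀ j, T j ≤ |y j / x j| := by
        intro j
        have hxj : |x j| = |x 0| * |mu| ^j := by
          rw [hxf j, hα, hβx]; rw [zero_mul, zero_add, abs_mul, abs_pow]
        have hyj : |γ| * |lam| ^j - |δ| * |mu| ^j ≤ |y j| := by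
          rw [hyf j]
          calc |γ| * |lam| ^j - |δ| * |mu| ^j = |γ*lam^j| - |δ*mu^j| := by
                rw [abs_mul, abs_mul, abs_pow, abs_pow]
            _ ≤ |γ*lam^j + δ*mu^j| := abs_sub_le_abs_add _ _
        have hxpos : 0 < |x 0| * |mu| ^j := by positivity
        rw [abs_div, hxj]
        have hx0' : |x 0| ≠ 0 := ne_of_gt (abs_pos.mpr hx0)
        have hmuj : (|mu|:ℝ)^j ≠ 0 := by positivity
        have heqT : T j = (|γ| * |lam| ^j - |δ| * |mu| ^j) / (|x 0| * |mu| ^j) := by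
          simp only [hT, hR, div_pow]
          field_simp
        rw [heqT]
        exact (div_le_div_iff_of_pos_right hxpos).mpr hyj
      have hγpos : 0 < |γ|/|x 0| := by
        apply div_pos (abs_pos.mpr hγ0) (abs_pos.mpr hx0)
      have hTtop : Tendsto T atTop atTop := by
        have h1 : Tendsto (fun j : ℕ => R^j) atTop atTop :=
          tendsto_pow_atTop_atTop_of_one_lt hR1
        have h2 : Tendsto (fun j : ℕ => (|γ|/|x 0|) * R^j) atTop atTop :=
          h1.const_mul_atTop hγpos
        simpa [hT, sub_eq_add_neg] using tendsto_atTop_add_const_right atTop (-(|δ|/|x 0|)) h2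
      have e1 : ∀ᶠ j in atTop, (1:ℝ) < T j := hTtop.eventually_gt_atTop 1
      have habs0 : Tendsto (fun j => |y j / x j|) atTop (nhds 0) := by
        simpa using hrat.abs
      have e2 : ∀ᶠ j in atTop, |y j / x j| < 1 := habs0.eventually (gt_mem_nhds one_pos)
      obtain ⟨j, hj1, hj2⟩ := (e1.and e2).exists
      exact absurd hj2 (not_lt.mpr (le_trans (le_of_lt hj1) (hTle j)))
  · -- α ≠ 0 : show γ = 0 and produce the limit
    set r := mu/lam with hrdef
    have hmulam : |mu| < |lam| := by linarith
    have hr : |r| < 1 := by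
      rw [hrdef, abs_div, div_lt_one hlamabspos]; exact hmulam
    have hrpow : Tendsto (fun j : ℕ => r^j) atTop (nhds 0) :=
      tendsto_pow_atTop_nhds_zero_of_abs_lt_one hr
    have hnum : Tendsto (fun j : ℕ => γ + δ*r^j) atTop (nhds γ) := by
      simpa using tendsto_const_nhds.add (hrpow.const_mul δ)
    have hden : Tendsto (fun j : ℕ => α + βx*r^j) atTop (nhds α) := by
      simpa using tendsto_const_nhds.add (hrpow.const_mul βx)
    have hkey : Tendsto (fun j : ℕ => (γ + δ*r^j)/(α + βx*r^j)) atTop (nhds (γ/α)) :=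
      hnum.div hden hα
    have heq : ∀ j : ℕ, (γ + δ*r^j)/(α + βx*r^j) = y j / x j := by
      intro j
      have hlj : lam^j ≠ 0 := pow_ne_zero _ hlam0
      have hxl : x j / lam^j = α + βx*r^j := by
        rw [hxf j, hrdef, div_pow]; field_simp
      have hyl : y j / lam^j = γ + δ*r^j := by
        rw [hyf j, hrdef, div_pow]; field_simp
      rw [← hxl, ← hyl, div_div_div_cancel_right₀]
      exact hlj
    have huniq : γ/α = 0 := tendsto_nhds_unique (hkey.congr heq) hrat
    have hγ0 : γ = 0 := by
      rcases div_eq_zero_iff.mp huniq with h | h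
      · exact h
      · exact absurd h hα
    have hδ : δ = y 0 := by rw [hγ0] at hsumy; linarith
    left
    refine ⟨|α| * |y 0|, mul_pos (abs_pos.mpr hα) (abs_pos.mpr hy0), ?_⟩
    set Q := |mu| * |mu| with hQ
    have hQ1 : Q < 1 := by nlinarith
    have hQ0 : (0:ℝ) ≤ Q := by positivity
    have hqt : Tendsto (fun j : ℕ => |βx*y 0| * Q^j) atTop (nhds 0) := by
      simpa using (tendsto_pow_atTop_nhds_zero_of_lt_one hQ0 hQ1).const_mul (|βx*y 0|)
    have hlow : Tendsto (fun j : ℕ => |α| * |y 0| - |βx*y 0| * Q^j) atTop (nhds (|α| * |y 0|)) := by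
      simpa using tendsto_const_nhds.sub hqt
    have hup : Tendsto (fun j : ℕ => |α| * |y 0| + |βx*y 0| * Q^j) atTop (nhds (|α| * |y 0|)) := by
      simpa using tendsto_const_nhds.add hqt
    have hxyj : ∀ j, |x j| * |y j| = |α*y 0*(lam*mu)^j + βx*y 0*(mu^j*mu^j)| := by
      intro j
      rw [← abs_mul]; congr 1
      rw [hxf j, hyf j, hγ0, hδ]; ring
    have hA : ∀ j, |α*y 0*(lam*mu)^j| = |α| * |y 0| := by
      intro j
      simp [abs_mul, abs_pow, hd]
    have hB : ∀ j, |βx*y 0*(mu^j*mu^j)| = |βx*y 0| * Q^j := by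
      intro j
      simp only [abs_mul, abs_pow, hQ, mul_pow]
    apply tendsto_of_tendsto_of_tendsto_of_le_of_le hlow hup
    · intro j
      have h1 := abs_sub_le_abs_add (α*y 0*(lam*mu)^j) (βx*y 0*(mu^j*mu^j))
      rw [hA j, hB j] at h1
      dsimp only
      rw [hxyj j]; linarith
    · intro j
      have h1 := abs_add_le (α*y 0*(lam*mu)^j) (βx*y 0*(mu^j*mu^j))
      rw [hA j, hB j] at h1
      dsimp only
      rw [hxyj j]; linarith

lemma class_par (eps : ℝ) (heps : eps^2 = 1) (x y : ℕ → ℝ)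
    (hxrec : ∀ j, x (j+2) = (2*eps) * x (j+1) - x j)
    (hyrec : ∀ j, y (j+2) = (2*eps) * y (j+1) - y j)
    (hx : ∀ j, x j ≠ 0) (hy0 : y 0 ≠ 0)
    (hrat : Tendsto (fun j => y j / x j) atTop (nhds 0)) :
    y 1 = eps * y 0 ∧ x 1 ≠ eps * x 0 := by
  have heps0 : eps ≠ 0 := by intro h; rw [h] at heps; norm_num at heps
  have habse : |eps| = 1 := by
    have h2 : eps = 1 ∨ eps = -1 := by
      rcases mul_eq_zero.mp (show (eps - 1) * (eps + 1) = 0 by linear_combination heps) with h | h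
      · left; linarith
      · right; linarith
    rcases h2 with h | h <;> simp [h]
  have hepow : ∀ j : ℕ, |eps^j| = 1 := fun j => by rw [abs_pow, habse, one_pow]
  have hepj : ∀ j : ℕ, eps^j ≠ 0 := fun j => pow_ne_zero _ heps0
  set nx := eps*x 1 - x 0 with hnx
  set ny := eps*y 1 - y 0 with hny
  have hxf : ∀ j, x j = eps^j*(x 0 + (j:ℝ)*nx) := rec_form_par eps heps x hxrec
  have hyf : ∀ j, y j = eps^j*(y 0 + (j:ℝ)*ny) := rec_form_par eps heps y hyrec
  have hratred : ∀ j : ℕ, y j / x j = (y 0 + (j:ℝ)*ny)/(x 0 + (j:ℝ)*nx) := by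
    intro j
    rw [hxf j, hyf j, mul_div_mul_left _ _ (hepj j)]
  have hxj0 : ∀ j : ℕ, x 0 + (j:ℝ)*nx ≠ 0 := by
    intro j h
    exact hx j (by rw [hxf j, h, mul_zero])
  have hny0 : ny = 0 := by
    by_contra hnyne
    by_cases hnx0 : nx = 0
    · -- x has constant absolute value, |y| → ∞
      have hxabs : ∀ j, |x j| = |x 0| := by
        intro j; rw [hxf j, hnx0, mul_zero, add_zero, abs_mul, hepow, one_mul]
      have hx0 : x 0 ≠ 0 := hx 0
      have hx0pos : 0 < |x 0| := abs_pos.mpr hx0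
      set T := fun j : ℕ => ((j:ℝ)*|ny| - |y 0|)/|x 0| with hT
      have hTle : ∀ j, T j ≤ |y j / x j| := by
        intro j
        have h2 := abs_sub_le_abs_add ((j:ℝ)*ny) (y 0)
        rw [abs_mul, Nat.abs_cast] at h2
        have he : |y j| = |(j:ℝ)*ny + y 0| := by
          rw [hyf j, abs_mul, hepow, one_mul, add_comm]
        have h1 : (j:ℝ)*|ny| - |y 0| ≤ |y j| := by rw [he]; exact h2
        rw [abs_div, hxabs j, hT]
        exact (div_le_div_iff_of_pos_right hx0pos).mpr h1
      have hTtop : Tendsto T atTop atTop := by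
        apply Tendsto.atTop_div_const hx0pos
        have h3 : Tendsto (fun j : ℕ => (j:ℝ)*|ny|) atTop atTop :=
          tendsto_natCast_atTop_atTop.atTop_mul_const (abs_pos.mpr hnyne)
        simpa [sub_eq_add_neg] using tendsto_atTop_add_const_right atTop (-(|y 0|)) h3
      have e1 : ∀ᶠ j in atTop, (1:ℝ) < T j := hTtop.eventually_gt_atTop 1
      have habs0 : Tendsto (fun j => |y j / x j|) atTop (nhds 0) := by
        simpa using hrat.abs
      have e2 : ∀ᶠ j in atTop, |y j / x j| < 1 := habs0.eventually (gt_mem_nhds one_pos)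
      obtain ⟨j, hj1, hj2⟩ := (e1.and e2).exists
      exact absurd hj2 (not_lt.mpr (le_trans (le_of_lt hj1) (hTle j)))
    · -- nx ≠ 0 : the ratio tends to ny/nx ≠ 0
      have hlim : Tendsto (fun j : ℕ => (y 0*(1/(j:ℝ)) + ny)/(x 0*(1/(j:ℝ)) + nx))
          atTop (nhds (ny/nx)) := by
        have h0 : Tendsto (fun j : ℕ => 1/(j:ℝ)) atTop (nhds 0) :=
          tendsto_one_div_atTop_nhds_zero_nat
        have hn : Tendsto (fun j : ℕ => y 0*(1/(j:ℝ)) + ny) atTop (nhds ny) := by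
          simpa using (h0.const_mul (y 0)).add tendsto_const_nhds
        have hdd : Tendsto (fun j : ℕ => x 0*(1/(j:ℝ)) + nx) atTop (nhds nx) := by
          simpa using (h0.const_mul (x 0)).add tendsto_const_nhds
        exact hn.div hdd hnx0
      have heqev : ∀ᶠ j : ℕ in atTop, (y 0*(1/(j:ℝ)) + ny)/(x 0*(1/(j:ℝ)) + nx) = y j / x j := by
        filter_upwards [eventually_ge_atTop 1] with j hj
        have hjne : (j:ℝ) ≠ 0 := Nat.cast_ne_zero.mpr (by omega)
        have e1 : y 0*(1/(j:ℝ)) + ny = (y 0 + (j:ℝ)*ny)/(j:ℝ) := by field_simp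
        have e2 : x 0*(1/(j:ℝ)) + nx = (x 0 + (j:ℝ)*nx)/(j:ℝ) := by field_simp
        rw [hratred j, e1, e2, div_div_div_cancel_right₀]
        exact hjne
      have := tendsto_nhds_unique (hlim.congr' heqev) hrat
      rcases div_eq_zero_iff.mp this with h | h
      · exact hnyne h
      · exact hnx0 h
  constructor
  · have h1 : eps*y 1 = y 0 := by rw [hny] at hny0; linarith
    linear_combination eps * h1 - y 1 * heps
  · intro hx1
    have hnx0 : nx = 0 := by rw [hnx, hx1]; linear_combination x 0 * heps
    have hcon : ∀ j : ℕ, y j / x j = y 0 / x 0 := by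
      intro j; rw [hratred j, hnx0, hny0]; simp
    have hconst : Tendsto (fun _ : ℕ => y 0 / x 0) atTop (nhds 0) := by
      apply hrat.congr hcon
    have h0 := (tendsto_nhds_unique hconst tendsto_const_nhds).symm
    rcases div_eq_zero_iff.mp h0 with h | h
    · exact hy0 h
    · exact hx 0 h

lemma class_ell (c s₀ : ℝ) (hs : s₀ ≠ 0) (hcs : c^2 + s₀^2 = 1) (x y : ℕ → ℝ)
    (hxrec : ∀ j, x (j+2) = (2*c) * x (j+1) - x j)
    (hyrec : ∀ j, y (j+2) = (2*c) * y (j+1) - y j)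
    (hx : ∀ j, x j ≠ 0) (hy0 : y 0 ≠ 0)
    (hrat : Tendsto (fun j => y j / x j) atTop (nhds 0)) : False := by
  -- discrete "rotation" sequences
  set CS : ℕ → ℝ × ℝ :=
    fun j => Nat.rec ((1:ℝ), (0:ℝ)) (fun _ p => (c*p.1 - s₀*p.2, s₀*p.1 + c*p.2)) j with hCS
  set C : ℕ → ℝ := fun j => (CS j).1 with hC
  set S : ℕ → ℝ := fun j => (CS j).2 with hS
  have hC0 : C 0 = 1 := rfl
  have hS0 : S 0 = 0 := rfl
  have hCstep : ∀ j, C (j+1) = c*C j - s₀*S j := fun j => rfl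
  have hSstep : ∀ j, S (j+1) = s₀*C j + c*S j := fun j => rfl
  have hnorm : ∀ j, (C j)^2 + (S j)^2 = 1 := by
    intro j
    induction j with
    | zero => rw [hC0, hS0]; norm_num
    | succ m ih =>
      rw [hCstep, hSstep]
      linear_combination ((C m)^2 + (S m)^2) * hcs + ih
  have hCrec : ∀ j, C (j+2) = (2*c) * C (j+1) - C j := by
    intro j
    rw [hCstep (j+1), hSstep j, hCstep j]
    linear_combination (-(C j)) * hcs
  have hSrec : ∀ j, S (j+2) = (2*c) * S (j+1) - S j := by
    intro j
    rw [hSstep (j+1), hCstep j, hSstep j]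
    linear_combination (-(S j)) * hcs
  have hC1 : C 1 = c := by
    have := hCstep 0; rw [hC0, hS0] at this; simpa using this
  have hS1 : S 1 = s₀ := by
    have := hSstep 0; rw [hC0, hS0] at this; simpa using this
  have hCb : ∀ j, |C j| ≤ 1 := by
    intro j
    have := hnorm j
    nlinarith [sq_nonneg (S j), sq_nonneg (C j), abs_nonneg (C j), sq_abs (C j)]
  have hSb : ∀ j, |S j| ≤ 1 := by
    intro j
    have := hnorm j
    nlinarith [sq_nonneg (S j), sq_nonneg (C j), abs_nonneg (S j), sq_abs (S j)]
  -- solution formulas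
  have form : ∀ u : ℕ → ℝ, (∀ j, u (j+2) = (2*c) * u (j+1) - u j) →
      ∀ j, u j = u 0 * C j + ((u 1 - c*u 0)/s₀) * S j := by
    intro u hu
    refine rec_eq (c := fun _ => 2*c) (e := fun _ => -1)
      (fun n => by rw [hu]; ring)
      (fun n => by
        rw [hCrec n, hSrec n]; ring)
      ?_ ?_
    · rw [hC0, hS0]; ring
    · rw [hC1, hS1]; field_simp; ring
  set b := (y 1 - c*y 0)/s₀ with hb
  set bx := (x 1 - c*x 0)/s₀ with hbx
  have hyform : ∀ j, y j = y 0 * C j + b * S j := form y hyrec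
  have hxform : ∀ j, x j = x 0 * C j + bx * S j := form x hxrec
  -- x is bounded, so y → 0
  have hxb : ∀ j, |x j| ≤ |x 0| + |bx| := by
    intro j
    rw [hxform j]
    calc |x 0 * C j + bx * S j| ≤ |x 0 * C j| + |bx * S j| := abs_add_le _ _
      _ ≤ |x 0| + |bx| := by
          rw [abs_mul, abs_mul]
          have e1 := mul_le_of_le_one_right (abs_nonneg (x 0)) (hCb j)
          have e2 := mul_le_of_le_one_right (abs_nonneg bx) (hSb j)
          linarith
  have hyto0 : Tendsto y atTop (nhds 0) := by
    have habs : Tendsto (fun j => |y j / x j| * (|x 0| + |bx|)) atTop (nhds 0) := by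
      simpa using (hrat.abs.mul_const (|x 0| + |bx|))
    have hbd : ∀ j, |y j| ≤ |y j / x j| * (|x 0| + |bx|) := by
      intro j
      rw [abs_div, div_mul_eq_mul_div, le_div_iff₀ (abs_pos.mpr (hx j))]
      have := hxb j
      nlinarith [abs_nonneg (y j)]
    have h0 : Tendsto (fun j => |y j|) atTop (nhds 0) :=
      tendsto_of_tendsto_of_tendsto_of_le_of_le tendsto_const_nhds habs
        (fun j => abs_nonneg _) hbd
    exact tendsto_zero_iff_abs_tendsto_zero y |>.mpr h0
  -- the rotated companion
  set yt := fun j => -(y 0) * S j + b * C j with hyt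
  have hstep : ∀ j, y (j+1) = c * y j + s₀ * yt j := by
    intro j
    rw [hyform (j+1), hCstep j, hSstep j, hyform j, hyt]
    ring
  have hinv : ∀ j, (y j)^2 + (yt j)^2 = (y 0)^2 + b^2 := by
    intro j
    rw [hyform j, hyt]
    have := hnorm j
    linear_combination ((y 0)^2 + b^2) * this
  have hyt0 : Tendsto (fun j => yt j) atTop (nhds 0) := by
    have h1 : Tendsto (fun j => y (j+1)) atTop (nhds 0) :=
      hyto0.comp (tendsto_add_atTop_nat 1)
    have h2 : Tendsto (fun j => y (j+1) - c * y j) atTop (nhds 0) := by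
      simpa using h1.sub (hyto0.const_mul c)
    have h3 : ∀ j, yt j = (y (j+1) - c * y j) / s₀ := by
      intro j; rw [hstep j]; field_simp; ring
    rw [show (fun j => yt j) = fun j => (y (j+1) - c * y j) / s₀ from funext h3]
    simpa using h2.div_const s₀
  have hsum0 : Tendsto (fun j => (y j)^2 + (yt j)^2) atTop (nhds 0) := by
    have := (hyto0.mul hyto0).add (hyt0.mul hyt0)
    simpa [pow_two] using this
  have hconst : Tendsto (fun _ : ℕ => (y 0)^2 + b^2) atTop (nhds 0) := by
    apply hsum0.congr hinv
  have h0 := tendsto_nhds_unique hconst tendsto_const_nhds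
  have : y 0 = 0 := by nlinarith [sq_nonneg (y 0), sq_nonneg b]
  exact hy0 this

lemma exists_lam_mu (τ d : ℝ) (hd : d = 1 ∨ d = -1) (hΔ : 4*d < τ^2) (hτ : τ ≠ 0) :
    ∃ lam mu : ℝ, lam + mu = τ ∧ lam * mu = d ∧ 1 < |lam| ∧ |lam * mu| = 1 := by
  have habsd : |d| = 1 := by rcases hd with h | h <;> simp [h]
  suffices h : ∀ τ' : ℝ, 0 < τ' → 4*d < τ'^2 →
      ∃ lam mu : ℝ, lam + mu = τ' ∧ lam * mu = d ∧ 1 < |lam| ∧ |lam * mu| = 1 by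
    rcases lt_or_gt_of_ne hτ with hneg | hpos
    · obtain ⟨l, m, h1, h2, h3, h4⟩ := h (-τ) (by linarith) (by nlinarith)
      refine ⟨-l, -m, by linarith, by rw [neg_mul_neg]; exact h2, by rwa [abs_neg], ?_⟩
      rw [neg_mul_neg]; exact h4
    · exact h τ hpos hΔ
  intro τ' h0 hΔ'
  have hsq : (0:ℝ) ≤ τ'^2 - 4*d := by linarith
  set ρ := Real.sqrt (τ'^2 - 4*d) with hρ
  have hρpos : 0 < ρ := Real.sqrt_pos.mpr (by linarith)
  have hρsq : ρ^2 = τ'^2 - 4*d := Real.sq_sqrt hsq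
  have hd0 : d ≠ 0 := by rcases hd with h | h <;> rw [h] <;> norm_num
  refine ⟨(τ'+ρ)/2, (τ'-ρ)/2, by ring, by linear_combination (-1/4 : ℝ) * hρsq, ?_, ?_⟩
  · -- 1 < |lam|
    have hlampos : 0 < (τ'+ρ)/2 := by linarith
    have hprod : ((τ'+ρ)/2) * ((τ'-ρ)/2) = d := by linear_combination (-1/4 : ℝ) * hρsq
    have habs : |(τ'+ρ)/2| * |(τ'-ρ)/2| = 1 := by
      rw [← abs_mul, hprod, habsd]
    have hlt : |(τ'-ρ)/2| < |(τ'+ρ)/2| := by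
      rw [abs_of_pos hlampos, abs_lt]
      constructor <;> [linarith; linarith]
    nlinarith [abs_nonneg ((τ'-ρ)/2), abs_nonneg ((τ'+ρ)/2)]
  · have hprod : ((τ'+ρ)/2) * ((τ'-ρ)/2) = d := by linear_combination (-1/4 : ℝ) * hρsq
    rw [hprod, habsd]

lemma combine (F : ℕ → ℝ) (k : ℕ) (hk : 0 < k)
    (h : ∀ r : ℕ, ∃ c₁ c₂ : ℝ, ∃ J : ℕ, 0 < c₁ ∧ c₁ ≤ c₂ ∧
      ∀ j ≥ J, c₁ ≤ F (r + j*k) ∧ F (r + j*k) ≤ c₂) :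
    ∃ t₁ t₂ : ℝ, 0 < t₁ ∧ t₁ ≤ t₂ ∧ ∃ N : ℕ, ∀ m ≥ N, t₁ ≤ F m ∧ F m ≤ t₂ := by
  choose c₁ c₂ J hpos hle hbound using h
  have hne : (Finset.range k).Nonempty := ⟨0, Finset.mem_range.mpr hk⟩
  set t₁ := (Finset.range k).inf' hne c₁ with ht₁
  set t₂ := (Finset.range k).sup' hne c₂ with ht₂
  set Jm := (Finset.range k).sup J with hJm
  refine ⟨t₁, t₂, ?_, ?_, k*(Jm + 1), ?_⟩
  · rw [ht₁, Finset.lt_inf'_iff]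
    intro r _; exact hpos r
  · calc t₁ ≤ c₁ 0 := Finset.inf'_le _ (Finset.mem_range.mpr hk)
      _ ≤ c₂ 0 := hle 0
      _ ≤ t₂ := Finset.le_sup' _ (Finset.mem_range.mpr hk)
  · intro m hm
    set r := m % k with hr
    set j := m / k with hj
    have hmrj : m = r + j*k := by
      rw [hr, hj]; rw [Nat.mod_add_div' m k]
    have hrk : r ∈ Finset.range k := Finset.mem_range.mpr (Nat.mod_lt m hk)
    have hjJ : J r ≤ j := by
      have h1 : Jm + 1 ≤ j := by
        rw [hj, Nat.le_div_iff_mul_le hk]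
        calc (Jm + 1) * k = k * (Jm + 1) := by ring
          _ ≤ m := hm
      have h2 : J r ≤ Jm := Finset.le_sup hrk
      omega
    obtain ⟨hb1, hb2⟩ := hbound r j hjJ
    rw [hmrj]
    exact ⟨le_trans (Finset.inf'_le _ hrk) hb1, le_trans hb2 (Finset.le_sup' _ hrk)⟩

lemma main_core (Kset : Subfield ℝ) (ξ : ℝ) (hξ : ξ ∉ Kset)
    (aR p q : ℕ → ℝ)
    (haK : ∀ n, aR n ∈ Kset) (hpK : ∀ n, p n ∈ Kset) (hqK : ∀ n, q n ∈ Kset)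
    (hprec : ∀ n, p (n+2) = aR (n+1) * p (n+1) + p n)
    (hqrec : ∀ n, q (n+2) = aR (n+1) * q (n+1) + q n)
    (k : ℕ) (hk : 0 < k) (hper : ∀ n, aR (n+k) = aR n)
    (hq0 : ∀ n, q n ≠ 0)
    (hω0 : p 1 * q 0 - p 0 * q 1 ≠ 0)
    (hconv : Tendsto (fun n => p n / q n) atTop (nhds ξ)) :
    ∃ t₁ t₂ : ℝ, 0 < t₁ ∧ t₁ ≤ t₂ ∧ ∃ N : ℕ, ∀ m ≥ N,
      t₁ ≤ |q m| * |ξ * q m - p m| ∧ |q m| * |ξ * q m - p m| ≤ t₂ := by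
  classical
  -- the Wronskian
  set ω := fun n => p (n+1) * q n - p n * q (n+1) with hω
  have hωrec : ∀ n, ω (n+1) = -ω n := by
    intro n; simp only [hω]; rw [hprec n, hqrec n]; ring
  have hωne : ∀ n, ω n ≠ 0 := by
    intro n
    induction n with
    | zero => exact hω0
    | succ m ih => rw [hωrec m]; exact neg_ne_zero.mpr ih
  have hωshift : ∀ i n, ω (n+i) = (-1)^i * ω n := by
    intro i
    induction i with
    | zero => intro n; simp
    | succ m ih =>
      intro n
      have : n + (m+1) = (n+m) + 1 := by omega
      rw [this, hωrec (n+m), ih n]; ring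
  -- the error sequence
  set s := fun n => ξ * q n - p n with hs
  have hsne : ∀ n, s n ≠ 0 := by
    intro n h
    apply hξ
    have hval : ξ = p n / q n := by
      rw [eq_div_iff (hq0 n)]
      simp only [hs] at h; linarith
    rw [hval]; exact div_mem (hpK n) (hqK n)
  -- the period-transfer coefficients (Cramer)
  set A := (q k * p 1 - q (1+k) * p 0)/(p 1 * q 0 - p 0 * q 1) with hA
  set B := (q (1+k) * q 0 - q k * q 1)/(p 1 * q 0 - p 0 * q 1) with hB
  set Cc := (p k * p 1 - p (1+k) * p 0)/(p 1 * q 0 - p 0 * q 1) with hCc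
  set D := (p (1+k) * q 0 - p k * q 1)/(p 1 * q 0 - p 0 * q 1) with hD
  have hAK : A ∈ Kset := div_mem (sub_mem (mul_mem (hqK k) (hpK 1)) (mul_mem (hqK (1+k)) (hpK 0)))
    (sub_mem (mul_mem (hpK 1) (hqK 0)) (mul_mem (hpK 0) (hqK 1)))
  have hDK : D ∈ Kset := div_mem (sub_mem (mul_mem (hpK (1+k)) (hqK 0)) (mul_mem (hpK k) (hqK 1)))
    (sub_mem (mul_mem (hpK 1) (hqK 0)) (mul_mem (hpK 0) (hqK 1)))
  have hqstep : ∀ n, q (n+2+k) = aR (n+1) * q (n+1+k) + 1 * q (n+k) := by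
    intro n
    have e1 : n+2+k = (n+k)+2 := by omega
    have e2 : n+1+k = (n+k)+1 := by omega
    rw [e1, hqrec (n+k), e2]
    rw [show aR (n+k+1) = aR (n+1) by rw [show n+k+1 = (n+1)+k by omega]; exact hper (n+1)]
    ring
  have hpstep : ∀ n, p (n+2+k) = aR (n+1) * p (n+1+k) + 1 * p (n+k) := by
    intro n
    have e1 : n+2+k = (n+k)+2 := by omega
    have e2 : n+1+k = (n+k)+1 := by omega
    rw [e1, hprec (n+k), e2]
    rw [show aR (n+k+1) = aR (n+1) by rw [show n+k+1 = (n+1)+k by omega]; exact hper (n+1)]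
    ring
  have hAq : ∀ n, q (n+k) = A * q n + B * p n := by
    have base0 : q (0+k) = A * q 0 + B * p 0 := by
      rw [zero_add, hA, hB]; field_simp; ring
    have base1 : q (1+k) = A * q 1 + B * p 1 := by
      rw [hA, hB]; field_simp; ring
    exact rec_eq (x := fun i => q (i+k)) (y := fun i => A*q i + B*p i)
      (c := fun i => aR (i+1)) (e := fun _ => 1)
      (fun n => hqstep n)
      (fun n => by
        show A*q (n+2) + B*p (n+2) = aR (n+1) * (A*q (n+1) + B*p (n+1)) + 1*(A*q n + B*p n)
        rw [hqrec n, hprec n]; ring)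
      base0 base1
  have hAp : ∀ n, p (n+k) = Cc * q n + D * p n := by
    have base0 : p (0+k) = Cc * q 0 + D * p 0 := by
      rw [zero_add, hCc, hD]; field_simp; ring
    have base1 : p (1+k) = Cc * q 1 + D * p 1 := by
      rw [hCc, hD]; field_simp; ring
    exact rec_eq (x := fun i => p (i+k)) (y := fun i => Cc*q i + D*p i)
      (c := fun i => aR (i+1)) (e := fun _ => 1)
      (fun n => hpstep n)
      (fun n => by
        show Cc*q (n+2) + D*p (n+2) = aR (n+1) * (Cc*q (n+1) + D*p (n+1)) + 1*(Cc*q n + D*p n)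
        rw [hqrec n, hprec n]; ring)
      base0 base1
  set τ := A + D with hτ
  set d := A*D - B*Cc with hdd
  have hτK : τ ∈ Kset := add_mem hAK hDK
  have hωd : ∀ n, ω (n+k) = d * ω n := by
    intro n
    simp only [hω]
    have e1 : n+k+1 = (n+1)+k := by omega
    rw [e1, hAq n, hAq (n+1), hAp n, hAp (n+1), hdd]
    ring
  have hd1 : d = 1 ∨ d = -1 := by
    have h1 := hωd 0
    have h2 := hωshift k 0
    rw [zero_add] at h1 h2
    have hdk : d = (-1)^k := mul_right_cancel₀ (hωne 0) (h1.symm.trans h2)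
    rcases Nat.even_or_odd k with he | ho
    · left; rw [hdk, he.neg_one_pow]
    · right; rw [hdk, ho.neg_one_pow]
  have hΦq : ∀ n, q (n+2*k) = τ * q (n+k) - d * q n := by
    intro n
    have e1 : n+2*k = (n+k)+k := by omega
    rw [e1, hAq (n+k), hAq n, hAp n, hτ, hdd]
    ring
  have hΦp : ∀ n, p (n+2*k) = τ * p (n+k) - d * p n := by
    intro n
    have e1 : n+2*k = (n+k)+k := by omega
    rw [e1, hAp (n+k), hAq n, hAp n, hτ, hdd]
    ring
  have hΦs : ∀ n, s (n+2*k) = τ * s (n+k) - d * s n := by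
    intro n
    simp only [hs]
    rw [hΦq n, hΦp n]
    ring
  have hrat0 : Tendsto (fun n => s n / q n) atTop (nhds 0) := by
    have h1 : Tendsto (fun n : ℕ => ξ - p n / q n) atTop (nhds (ξ - ξ)) :=
      tendsto_const_nhds.sub hconv
    rw [sub_self] at h1
    apply h1.congr
    intro n
    show ξ - p n / q n = (ξ * q n - p n) / q n
    rw [eq_div_iff (hq0 n), sub_mul, div_mul_cancel₀ _ (hq0 n)]
  -- combine over residue classes
  apply combine (F := fun m => |q m| * |ξ * q m - p m|) k hk
  intro r
  set x := fun j : ℕ => q (r + j*k) with hx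
  set Y := fun j : ℕ => s (r + j*k) with hY
  have hxrec : ∀ j, x (j+2) = τ * x (j+1) - d * x j := by
    intro j
    show q (r + (j+2)*k) = τ * q (r + (j+1)*k) - d * q (r + j*k)
    have e1 : r+(j+2)*k = (r+j*k)+2*k := by ring
    have e2 : r+(j+1)*k = (r+j*k)+k := by ring
    rw [e1, e2]; exact hΦq (r+j*k)
  have hYrec : ∀ j, Y (j+2) = τ * Y (j+1) - d * Y j := by
    intro j
    show s (r + (j+2)*k) = τ * s (r + (j+1)*k) - d * s (r + j*k)
    have e1 : r+(j+2)*k = (r+j*k)+2*k := by ring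
    have e2 : r+(j+1)*k = (r+j*k)+k := by ring
    rw [e1, e2]; exact hΦs (r+j*k)
  have hxne : ∀ j, x j ≠ 0 := fun j => hq0 _
  have hY0 : Y 0 ≠ 0 := hsne _
  have hmono : Tendsto (fun j : ℕ => r + j*k) atTop atTop := by
    apply tendsto_atTop_mono (f := id) ?_ tendsto_id
    intro j
    simp only [id]
    calc j = j*1 := (mul_one j).symm
      _ ≤ j*k := Nat.mul_le_mul_left j hk
      _ ≤ r + j*k := Nat.le_add_left _ _
  have hclass : Tendsto (fun j => Y j / x j) atTop (nhds 0) := hrat0.comp hmono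
  have hconvclass : Tendsto (fun j => p (r+j*k) / q (r+j*k)) atTop (nhds ξ) := hconv.comp hmono
  have hFeq : ∀ j, |q (r+j*k)| * |ξ * q (r+j*k) - p (r+j*k)| = |x j| * |Y j| := by
    intro j; rfl
  by_cases hτ0 : τ = 0
  · exfalso
    rcases hd1 with hd | hd
    · -- d = 1, τ = 0 : elliptic with c = 0
      have hx' : ∀ j, x (j+2) = (2*(0:ℝ)) * x (j+1) - x j := by
        intro j; rw [hxrec j, hτ0, hd]; ring
      have hY' : ∀ j, Y (j+2) = (2*(0:ℝ)) * Y (j+1) - Y j := by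
        intro j; rw [hYrec j, hτ0, hd]; ring
      exact class_ell 0 1 one_ne_zero (by norm_num) x Y hx' hY' hxne hY0 hclass
    · -- d = -1, τ = 0 : periodic
      have hx' : ∀ j, x (j+2) = x j := by
        intro j; rw [hxrec j, hτ0, hd]; ring
      have hY' : ∀ j, Y (j+2) = Y j := by
        intro j; rw [hYrec j, hτ0, hd]; ring
      exact class_per x Y hx' hY' (hxne 0) hY0 hclass
  · by_cases hpar : τ^2 = 4*d
    · -- parabolic
      exfalso
      have hd' : d = 1 := by
        rcases hd1 with h | h
        · exact h
        · exfalso; rw [h] at hpar; nlinarith [sq_nonneg τ]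
      set eps := τ/2 with hepsdef
      have hτ4 : τ^2 = 4 := by rw [hd'] at hpar; linarith
      have heps : eps^2 = 1 := by
        rw [hepsdef]; rw [div_pow]; rw [hτ4]; norm_num
      have hepsK : eps ∈ Kset := by
        rw [hepsdef]
        refine div_mem hτK ?_
        have h2 : (2:ℝ) = 1 + 1 := by norm_num
        rw [h2]; exact add_mem (Subfield.one_mem Kset) (Subfield.one_mem Kset)
      have hx' : ∀ j, x (j+2) = (2*eps) * x (j+1) - x j := by
        intro j; rw [hxrec j, hepsdef, hd']; ring
      have hY' : ∀ j, Y (j+2) = (2*eps) * Y (j+1) - Y j := by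
        intro j; rw [hYrec j, hepsdef, hd']; ring
      obtain ⟨hy1, hx1⟩ := class_par eps heps x Y hx' hY' hxne hY0 hclass
      apply hξ
      have hx1e : x 1 = q (r+k) := by show q (r+1*k) = q (r+k); rw [one_mul]
      have hx0e : x 0 = q r := by show q (r+0*k) = q r; norm_num
      have hY1e : Y 1 = ξ * q (r+k) - p (r+k) := by
        show s (r+1*k) = _; rw [one_mul]
      have hY0e : Y 0 = ξ * q r - p r := by
        show s (r+0*k) = _; norm_num; rfl
      have hden : q (r+k) - eps * q r ≠ 0 := by
        intro h
        apply hx1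
        rw [hx1e, hx0e]; linarith
      have hkey : ξ = (p (r+k) - eps * p r)/(q (r+k) - eps * q r) := by
        rw [eq_div_iff hden]
        rw [hY1e, hY0e] at hy1
        linarith
      rw [hkey]
      exact div_mem (sub_mem (hpK _) (mul_mem hepsK (hpK r)))
        (sub_mem (hqK _) (mul_mem hepsK (hqK r)))
    · by_cases hell : τ^2 < 4*d
      · -- elliptic
        exfalso
        have hd' : d = 1 := by
          rcases hd1 with h | h
          · exact h
          · exfalso; rw [h] at hell; nlinarith [sq_nonneg τ]
        set cc := τ/2 with hccdef
        have hcc1 : cc^2 < 1 := by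
          rw [hd'] at hell
          have h4 : τ^2 < 4 := by linarith
          rw [hccdef, div_pow, div_lt_one (by norm_num : (0:ℝ) < 2^2)]
          norm_num
          linarith
        set s₀ := Real.sqrt (1 - cc^2) with hs₀
        have hs₀pos : 0 < s₀ := Real.sqrt_pos.mpr (by linarith)
        have hcs : cc^2 + s₀^2 = 1 := by
          rw [hs₀, Real.sq_sqrt (by linarith : (0:ℝ) ≤ 1 - cc^2)]; ring
        have hx' : ∀ j, x (j+2) = (2*cc) * x (j+1) - x j := by
          intro j; rw [hxrec j, hccdef, hd']; ring
        have hY' : ∀ j, Y (j+2) = (2*cc) * Y (j+1) - Y j := by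
          intro j; rw [hYrec j, hccdef, hd']; ring
        exact class_ell cc s₀ (ne_of_gt hs₀pos) hcs x Y hx' hY' hxne hY0 hclass
      · -- hyperbolic
        have h4 : 4*d < τ^2 := lt_of_le_of_ne (not_lt.mp hell) (fun h => hpar h.symm)
        obtain ⟨lam, mu, hsum, hprodd, hlam, habs1⟩ := exists_lam_mu τ d hd1 h4 hτ0
        have hx' : ∀ j, x (j+2) = (lam+mu) * x (j+1) - lam*mu * x j := by
          intro j; rw [hxrec j, hsum, hprodd]
        have hY' : ∀ j, Y (j+2) = (lam+mu) * Y (j+1) - lam*mu * Y j := by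
          intro j; rw [hYrec j, hsum, hprodd]
        rcases class_hyp lam mu x Y habs1 hlam hx' hY' hxne hY0 hclass with
          ⟨L, hL, hT⟩ | ⟨hxc, hyc⟩
        · -- good case : extract the eventual bounds
          have hev : ∀ᶠ j in atTop, |x j| * |Y j| ∈ Set.Ioo (L/2) (L+1) :=
            hT.eventually (Ioo_mem_nhds (by linarith) (by linarith))
          rw [eventually_atTop] at hev
          obtain ⟨J, hJ⟩ := hev
          refine ⟨L/2, L+1, J, by linarith, by linarith, ?_⟩
          intro j hj
          have := hJ j hj
          rw [hFeq j]
          exact ⟨le_of_lt this.1, le_of_lt this.2⟩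
        · -- degenerate case : ξ would be in Kset
          exfalso
          apply hξ
          have hmu0 : mu ≠ 0 := by
            intro h; rw [h, mul_zero, abs_zero] at habs1; norm_num at habs1
          have hx0e : x 0 = q r := by show q (r+0*k) = q r; norm_num
          have hY0e : Y 0 = ξ * q r - p r := by show s (r+0*k) = _; norm_num; rfl
          have hq' : ∀ j, q (r+j*k) = q r * mu^j := by
            intro j
            have := hxc j
            rw [hx0e] at this
            exact this
          have hp' : ∀ j, p (r+j*k) = (p r) * mu^j := by
            intro j
            have h1 := hxc j
            have h2 := hyc j
            rw [hx0e] at h1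
            rw [hY0e] at h2
            have hpe : p (r+j*k) = ξ * x j - Y j := by
              show p (r+j*k) = ξ * q (r+j*k) - s (r+j*k)
              simp only [hs]; ring
            rw [hpe, h1, h2]
            ring
          have hratconst : ∀ j, p (r+j*k)/q (r+j*k) = p r / q r := by
            intro j
            rw [hp' j, hq' j, mul_comm (p r) _, mul_comm (q r) _,
              mul_div_mul_left _ _ (pow_ne_zero j hmu0)]
          have hfin : ξ = p r / q r := by
            refine tendsto_nhds_unique hconvclass ?_
            exact (tendsto_congr hratconst).mpr tendsto_const_nhds
          rw [hfin]
          exact div_mem (hpK r) (hqK r)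



lemma cfP_coe (K : Subfield ℝ) (a : ℕ → K) :
    ∀ n, cfP (fun i => ((a i : ℝ))) n = ((cfP a n : K) : ℝ) := by
  intro n
  induction n using Nat.strong_induction_on with
  | _ n ih =>
    match n with
    | 0 => simp [cfP]
    | 1 => simp [cfP]
    | (m+2) =>
      show (a (m+1) : ℝ) * cfP (fun i => ((a i : ℝ))) (m+1) + cfP (fun i => ((a i : ℝ))) m
        = ((cfP a (m+2) : K) : ℝ)
      rw [ih (m+1) (by omega), ih m (by omega)]
      show _ = ((a (m+1) * cfP a (m+1) + cfP a m : K) : ℝ)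
      push_cast
      ring

lemma cfQ_coe (K : Subfield ℝ) (a : ℕ → K) :
    ∀ n, cfQ (fun i => ((a i : ℝ))) n = ((cfQ a n : K) : ℝ) := by
  intro n
  induction n using Nat.strong_induction_on with
  | _ n ih =>
    match n with
    | 0 => simp [cfQ]
    | 1 => simp [cfQ]
    | (m+2) =>
      show (a (m+1) : ℝ) * cfQ (fun i => ((a i : ℝ))) (m+1) + cfQ (fun i => ((a i : ℝ))) m
        = ((cfQ a (m+2) : K) : ℝ)
      rw [ih (m+1) (by omega), ih m (by omega)]
      show _ = ((a (m+1) * cfQ a (m+1) + cfQ a m : K) : ℝ)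
      push_cast
      ring

/-- for a convergent ultimately periodic expansion of a quartic irrational
quadratic over `K`, `|Qₙ|·|ξQₙ − Pₙ|` is eventually bounded above and below by positive
constants. -/
theorem Qn_xi_error_two_sided_bound
    (K : Subfield ℝ) (hK : Module.finrank ℚ K = 2)
    (a : ℕ → K) (ha : ∀ n, IsIntegral ℤ (a n))
    (hper : UltimatelyPeriodic a)
    (ξ : ℝ) (hquartic : (minpoly ℚ ξ).natDegree = 4)
    (hquad : ∃ A B C : K, IsIntegral ℤ A ∧ IsIntegral ℤ B ∧ IsIntegral ℤ C ∧ A ≠ 0 ∧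
      (↑A : ℝ) * ξ ^ 2 + (↑B : ℝ) * ξ + (↑C : ℝ) = 0)
    (hconv : CFConvergesTo (fun n => (a n : ℝ)) ξ) :
    ∃ t₁ t₂ : ℝ, 0 < t₁ ∧ t₁ ≤ t₂ ∧ ∃ N : ℕ, ∀ n ≥ N,
      t₁ ≤ |(↑(cfQ a (n + 1)) : ℝ)| * |ξ * (↑(cfQ a (n + 1)) : ℝ) - (↑(cfP a (n + 1)) : ℝ)| ∧
      |(↑(cfQ a (n + 1)) : ℝ)| * |ξ * (↑(cfQ a (n + 1)) : ℝ) - (↑(cfP a (n + 1)) : ℝ)| ≤ t₂ := by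
  classical
  obtain ⟨Nper, k, hk, hperiod⟩ := hper
  obtain ⟨⟨N₀, hq0'⟩, hconv2⟩ := hconv
  -- ξ is not in K, since it has degree 4 over ℚ
  have hξ : ξ ∉ K := by
    intro hmem
    haveI : FiniteDimensional ℚ K :=
      FiniteDimensional.of_finrank_eq_succ (n := 1) (by simpa using hK)
    set x : K := ⟨ξ, hmem⟩ with hx
    have h1 : (minpoly ℚ x).natDegree ≤ 2 := hK ▸ minpoly.natDegree_le x
    have h2 : minpoly ℚ x = minpoly ℚ ξ := by
      have := minpoly.algebraMap_eq (A := ℚ) (B := K) (B' := ℝ) Subtype.coe_injective x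
      rw [← this]; rfl
    rw [h2, hquartic] at h1; omega
  -- real-valued sequences
  set aR : ℕ → ℝ := fun n => ((a n : K) : ℝ) with haR
  set pR : ℕ → ℝ := fun n => ((cfP a n : K) : ℝ) with hpR
  set qR : ℕ → ℝ := fun n => ((cfQ a n : K) : ℝ) with hqR
  have hprecR : ∀ n, pR (n+2) = aR (n+1) * pR (n+1) + pR n := by
    intro n
    show ((cfP a (n+2) : K) : ℝ) = _
    show ((a (n+1) * cfP a (n+1) + cfP a n : K) : ℝ) = _
    push_cast
    ring
  have hqrecR : ∀ n, qR (n+2) = aR (n+1) * qR (n+1) + qR n := by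
    intro n
    show ((cfQ a (n+2) : K) : ℝ) = _
    show ((a (n+1) * cfQ a (n+1) + cfQ a n : K) : ℝ) = _
    push_cast
    ring
  have hp0 : pR 0 = 1 := by show ((cfP a 0 : K) : ℝ) = 1; show (((1:K)) : ℝ) = 1; push_cast; rfl
  have hq0v : qR 0 = 0 := by show ((cfQ a 0 : K) : ℝ) = 0; show (((0:K)) : ℝ) = 0; push_cast; rfl
  have hq1v : qR 1 = 1 := by show ((cfQ a 1 : K) : ℝ) = 1; show (((1:K)) : ℝ) = 1; push_cast; rfl
  -- Wronskian values
  have hωval : ∀ n, pR (n+1) * qR n - pR n * qR (n+1) = (-1:ℝ)^(n+1) := by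
    intro n
    induction n with
    | zero =>
      rw [hp0, hq0v, hq1v]
      norm_num
    | succ m ih =>
      show pR (m+2) * qR (m+1) - pR (m+1) * qR (m+2) = (-1:ℝ)^(m+2)
      rw [hprecR m, hqrecR m, show (-1:ℝ)^(m+2) = -((-1:ℝ)^(m+1)) by ring, ← ih]
      ring
  -- convergence data
  have hconvR : Tendsto (fun m => pR m / qR m) atTop (nhds ξ) := by
    have he : (fun n => cfP (fun i => ((a i : ℝ))) (n+1) / cfQ (fun i => ((a i : ℝ))) (n+1))
        = fun n => pR (n+1) / qR (n+1) := by
      funext n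
      simp only [haR, hpR, hqR]
      rw [cfP_coe K a, cfQ_coe K a]
    rw [he] at hconv2
    exact (tendsto_add_atTop_iff_nat 1).mp hconv2
  have hq0R : ∀ m ≥ N₀ + 1, qR m ≠ 0 := by
    intro m hm h
    have h1 := hq0' (m-1) (by omega)
    apply h1
    have e1 : (m-1)+1 = m := by omega
    rw [e1]
    have e2 : cfQ aR m = qR m := by
      rw [haR, hqR]
      exact cfQ_coe K a m
    rw [e2, h]
  -- translated sequences
  set N₁ := max (Nper + 1) (N₀ + 1) with hN₁
  set p' : ℕ → ℝ := fun i => pR (i + N₁) with hp'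
  set q' : ℕ → ℝ := fun i => qR (i + N₁) with hq'
  set a' : ℕ → ℝ := fun i => aR (i + N₁) with ha'
  have hmain := main_core K ξ hξ a' p' q'
    (fun n => by exact SetLike.coe_mem _)
    (fun n => by exact SetLike.coe_mem _)
    (fun n => by exact SetLike.coe_mem _)
    (fun n => by
      show pR ((n+2) + N₁) = aR ((n+1) + N₁) * pR ((n+1) + N₁) + pR (n + N₁)
      rw [show (n+2) + N₁ = (n + N₁) + 2 by omega, hprecR (n + N₁),
        show (n + N₁) + 1 = (n+1) + N₁ by omega])
    (fun n => by
      show qR ((n+2) + N₁) = aR ((n+1) + N₁) * qR ((n+1) + N₁) + qR (n + N₁)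
      rw [show (n+2) + N₁ = (n + N₁) + 2 by omega, hqrecR (n + N₁),
        show (n + N₁) + 1 = (n+1) + N₁ by omega])
    k hk
    (fun n => by
      show aR ((n+k) + N₁) = aR (n + N₁)
      rw [show (n+k) + N₁ = (n+N₁)+k by omega]
      rw [haR]
      exact congrArg (fun z : K => (z : ℝ)) (hperiod (n + N₁) (by omega)))
    (fun n => hq0R (n + N₁) (by omega))
    (by
      show pR (1 + N₁) * qR (0 + N₁) - pR (0 + N₁) * qR (1 + N₁) ≠ 0
      rw [show (1:ℕ) + N₁ = N₁ + 1 by omega, show (0:ℕ) + N₁ = N₁ by omega]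
      rw [hωval N₁]
      apply pow_ne_zero
      norm_num)
    (hconvR.comp (tendsto_add_atTop_nat N₁))
  obtain ⟨t₁, t₂, ht1, ht12, N, hN⟩ := hmain
  refine ⟨t₁, t₂, ht1, ht12, N + N₁, ?_⟩
  intro n hn
  have h1 := hN (n + 1 - N₁) (by omega)
  have e1 : (n + 1 - N₁) + N₁ = n + 1 := by omega
  show t₁ ≤ |qR (n+1)| * |ξ * qR (n+1) - pR (n+1)| ∧
    |qR (n+1)| * |ξ * qR (n+1) - pR (n+1)| ≤ t₂
  have e2 : q' (n + 1 - N₁) = qR (n+1) := by rw [hq']; simp only; rw [e1]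
  have e3 : p' (n + 1 - N₁) = pR (n+1) := by rw [hp']; simp only; rw [e1]
  rw [e2, e3] at h1
  exact h1
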